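/- Let n ≥ 1 be a natural number and let s, t be real numbers. Then the (n−1)-st iterated derivative of the function x ↦ e^{n x}·(x−t)^n, evaluated at x = s, equals e^{n s} · Σ_{j=0}^{n−1} binom(n−1,j) · n^{j} · (n!/(j+1)!) · (s−t)^{j+1}. (This is the Lagrange coefficient computation for the equation (x−s)/(x−t) = l·e^x, whose series solution is expressed via generalized Laguerre polynomials L^{(1)}_{n−1}.) -/

import Mathlib

open Real Finset

lemma sum_id (a u : ℝ) (m d : ℕ) :
    ∑ k ∈ Finset.range (m+1), (m.choose k : ℝ) * a^k *
        (((d+m+1).factorial : ℝ) / ((d+k+1).factorial : ℝ)) *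
        (a * u^(d+k+1) + ((d+k+1 : ℕ) : ℝ) * u^(d+k))
    = ∑ k ∈ Finset.range (m+2), ((m+1).choose k : ℝ) * a^k *
        (((d+m+1).factorial : ℝ) / ((d+k).factorial : ℝ)) * u^(d+k) := by
  have hfac : ∀ j : ℕ, ((j.factorial : ℝ)) ≠ 0 := fun j => by
    exact_mod_cast j.factorial_ne_zero
  have key : ∀ k : ℕ,
      (m.choose k : ℝ) * a^k * (((d+m+1).factorial : ℝ) / ((d+k+1).factorial : ℝ)) *
        (a * u^(d+k+1))
      + (m.choose (k+1) : ℝ) * a^(k+1) *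
        (((d+m+1).factorial : ℝ) / ((d+(k+1)+1).factorial : ℝ)) *
        (((d+(k+1)+1 : ℕ) : ℝ) * u^(d+(k+1)))
      = ((m+1).choose (k+1) : ℝ) * a^(k+1) *
        (((d+m+1).factorial : ℝ) / ((d+(k+1)).factorial : ℝ)) * u^(d+(k+1)) := by
    intro k
    have hf : ((d+k+2).factorial : ℝ) = ((d+k+2 : ℕ) : ℝ) * ((d+k+1).factorial : ℝ) := by
      rw [Nat.factorial_succ]; push_cast; ring
    have hc : (((m+1).choose (k+1) : ℕ) : ℝ) = (m.choose k : ℝ) + (m.choose (k+1) : ℝ) := by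
      rw [Nat.choose_succ_succ]; push_cast; ring
    show _ = (((m+1).choose (k+1) : ℕ) : ℝ) * _ * _ * _
    rw [hc]
    have e1 : d+(k+1)+1 = d+k+2 := by omega
    have e2 : d+(k+1) = d+k+1 := by omega
    rw [e1, e2, hf]
    field_simp
    ring
  simp only [mul_add]
  rw [Finset.sum_add_distrib]
  rw [Finset.sum_range_succ (fun k => (m.choose k : ℝ) * a^k *
        (((d+m+1).factorial : ℝ) / ((d+k+1).factorial : ℝ)) * (a * u^(d+k+1))) m]
  rw [Finset.sum_range_succ' (fun k => (m.choose k : ℝ) * a^k *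
        (((d+m+1).factorial : ℝ) / ((d+k+1).factorial : ℝ)) *
        (((d+k+1 : ℕ) : ℝ) * u^(d+k))) m]
  rw [Finset.sum_range_succ' (fun k => ((m+1).choose k : ℝ) * a^k *
        (((d+m+1).factorial : ℝ) / ((d+k).factorial : ℝ)) * u^(d+k)) (m+1)]
  rw [Finset.sum_range_succ (fun k => ((m+1).choose (k+1) : ℝ) * a^(k+1) *
        (((d+m+1).factorial : ℝ) / ((d+(k+1)).factorial : ℝ)) * u^(d+(k+1))) m]
  have hAB : ∑ k ∈ Finset.range m, ((m.choose k : ℝ) * a^k *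
        (((d+m+1).factorial : ℝ) / ((d+k+1).factorial : ℝ)) * (a * u^(d+k+1))
        + (m.choose (k+1) : ℝ) * a^(k+1) *
        (((d+m+1).factorial : ℝ) / ((d+(k+1)+1).factorial : ℝ)) *
        (((d+(k+1)+1 : ℕ) : ℝ) * u^(d+(k+1))))
      = ∑ k ∈ Finset.range m, ((m+1).choose (k+1) : ℝ) * a^(k+1) *
        (((d+m+1).factorial : ℝ) / ((d+(k+1)).factorial : ℝ)) * u^(d+(k+1)) :=
    Finset.sum_congr rfl (fun k _ => key k)
  rw [Finset.sum_add_distrib] at hAB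
  have hlast : (m.choose m : ℝ) * a^m *
        (((d+m+1).factorial : ℝ) / ((d+m+1).factorial : ℝ)) * (a * u^(d+m+1))
      = ((m+1).choose (m+1) : ℝ) * a^(m+1) *
        (((d+m+1).factorial : ℝ) / ((d+(m+1)).factorial : ℝ)) * u^(d+(m+1)) := by
    have e2 : d+(m+1) = d+m+1 := by omega
    rw [e2]
    simp [Nat.choose_self]
    ring
  have hzero : (m.choose 0 : ℝ) * a^0 *
        (((d+m+1).factorial : ℝ) / ((d+0+1).factorial : ℝ)) *
        (((d+0+1 : ℕ) : ℝ) * u^(d+0))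
      = ((m+1).choose 0 : ℝ) * a^0 *
        (((d+m+1).factorial : ℝ) / ((d+0).factorial : ℝ)) * u^(d+0) := by
    have hf : ((d+1).factorial : ℝ) = ((d+1 : ℕ) : ℝ) * (d.factorial : ℝ) := by
      rw [Nat.factorial_succ]; push_cast; ring
    simp only [Nat.choose_zero_right, Nat.add_zero, pow_zero]
    rw [hf]
    field_simp
  linarith [hAB, hlast, hzero]

lemma aux_iter (a t : ℝ) : ∀ (m d : ℕ),
    iteratedDeriv m (fun x : ℝ => Real.exp (a*x) * (x - t)^(d+m))
    = fun s : ℝ => Real.exp (a*s) * ∑ k ∈ Finset.range (m+1),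
        (m.choose k : ℝ) * a^k *
          (((d+m).factorial : ℝ) / ((d+k).factorial : ℝ)) * (s-t)^(d+k) := by
  intro m
  induction m with
  | zero =>
    intro d
    funext s
    simp [Nat.factorial_ne_zero]
  | succ m ih =>
    intro d
    have hp : (fun x : ℝ => Real.exp (a*x) * (x - t)^(d+(m+1)))
        = fun x : ℝ => Real.exp (a*x) * (x - t)^((d+1)+m) := by
      have : d+(m+1) = (d+1)+m := by omega
      rw [this]
    rw [iteratedDeriv_succ, hp, ih (d+1)]
    funext s
    have hfun : (fun s : ℝ => Real.exp (a*s) * ∑ k ∈ Finset.range (m+1),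
          (m.choose k : ℝ) * a^k *
            ((((d+1)+m).factorial : ℝ) / (((d+1)+k).factorial : ℝ)) * (s-t)^((d+1)+k))
        = fun s : ℝ => ∑ k ∈ Finset.range (m+1), Real.exp (a*s) *
            ((m.choose k : ℝ) * a^k *
            ((((d+1)+m).factorial : ℝ) / (((d+1)+k).factorial : ℝ)) * (s-t)^((d+1)+k)) := by
      funext x
      rw [Finset.mul_sum]
    rw [hfun]
    have hterm : ∀ k ∈ Finset.range (m+1), HasDerivAt (fun x : ℝ => Real.exp (a*x) *
          ((m.choose k : ℝ) * a^k *
            ((((d+1)+m).factorial : ℝ) / (((d+1)+k).factorial : ℝ)) * (x-t)^((d+1)+k)))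
        (Real.exp (a*s) * ((m.choose k : ℝ) * a^k *
            ((((d+1)+m).factorial : ℝ) / (((d+1)+k).factorial : ℝ)) *
            (a * (s-t)^(d+k+1) + (((d+k+1 : ℕ)) : ℝ) * (s-t)^(d+k)))) s := by
      intro k _
      have e1 : (d+1)+k = (d+k)+1 := by omega
      rw [e1]
      have h1 : HasDerivAt (fun x : ℝ => Real.exp (a*x)) (Real.exp (a*s) * a) s := by
        simpa using ((hasDerivAt_id s).const_mul a).exp
      have h2 : HasDerivAt (fun x : ℝ => (x - t)^((d+k)+1))
          ((((d+k)+1 : ℕ) : ℝ) * (s - t)^(d+k)) s := by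
        have := ((hasDerivAt_id s).sub_const t).fun_pow ((d+k)+1)
        simpa using this
      have h3 := h1.fun_mul (h2.const_mul
        ((m.choose k : ℝ) * a^k * ((((d+1)+m).factorial : ℝ) / (((d+k)+1).factorial : ℝ))))
      refine h3.congr_deriv ?_
      push_cast
      ring
    rw [HasDerivAt.deriv (HasDerivAt.fun_sum hterm)]
    rw [← Finset.mul_sum]
    congr 1
    have e2 : (d+1)+m = d+m+1 := by omega
    have e3 : d+(m+1) = d+m+1 := by omega
    rw [e2, e3]
    have hL : (∑ k ∈ Finset.range (m+1), (m.choose k : ℝ) * a^k *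
          (((d+m+1).factorial : ℝ) / (((d+1)+k).factorial : ℝ)) *
          (a * (s-t)^(d+k+1) + (((d+k+1 : ℕ)) : ℝ) * (s-t)^(d+k)))
        = ∑ k ∈ Finset.range (m+1), (m.choose k : ℝ) * a^k *
          (((d+m+1).factorial : ℝ) / ((d+k+1).factorial : ℝ)) *
          (a * (s-t)^(d+k+1) + (((d+k+1 : ℕ)) : ℝ) * (s-t)^(d+k)) :=
      Finset.sum_congr rfl (fun k _ => by rw [show (d+1)+k = d+k+1 from by omega])
    rw [hL]
    exact sum_id a (s - t) m d

/-- Lagrange coefficient computation for `(x−s)/(x−t) = l·e^x`: the (n−1)-st iterated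
derivative of `x ↦ e^{nx}·(x−t)^n` at `x = s` equals
`e^{ns} · Σ_{j=0}^{n−1} binom(n−1,j)·n^j·(n!/(j+1)!)·(s−t)^{j+1}`. -/
theorem lagrange_coeff_laguerre (n : ℕ) (hn : 1 ≤ n) (s t : ℝ) :
    iteratedDeriv (n - 1) (fun x : ℝ => Real.exp ((n : ℝ) * x) * (x - t) ^ n) s =
      Real.exp ((n : ℝ) * s) *
        ∑ j ∈ Finset.range n,
          ((n - 1).choose j : ℝ) * (n : ℝ) ^ j *
            ((n.factorial : ℝ) / ((j + 1).factorial : ℝ)) * (s - t) ^ (j + 1) := by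
  obtain ⟨m, rfl⟩ : ∃ m, n = m + 1 := ⟨n - 1, by omega⟩
  have h := congrFun (aux_iter ((m+1 : ℕ) : ℝ) t m 1) s
  simp only [show ∀ x : ℕ, 1 + x = x + 1 from fun x => Nat.add_comm 1 x] at h
  simpa [Nat.add_sub_cancel] using h
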